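/- Consider a nonautonomous system ẋ(t) = f(x(t), t) on ℝ^d with f piecewise continuous in t, locally Lipschitz in x, and f(0, t) = 0. Suppose there exists a function 𝓛(t, x) ≥ 0 with λ₁‖x‖² ≤ 𝓛(t, x) ≤ λ₂‖x‖² (λ₁, λ₂ > 0) such that along every solution x(t), writing 𝓛_x(t) = 𝓛(t, x(t)): (a) d𝓛_x(t)/dt ≤ −γ x(t)ᵀ Σ(t) x(t), where Σ(t) is positive semidefinite with ‖Σ(t)‖ ≤ λ_Σ and γ = γ(x(0)) > 0; (b) Σ(t) is persistently exciting with constants T, μ > 0; and (c) d𝓛_x(t)/dt ≤ −(1/c)‖f(x(t), t)‖² for some c > 0. Then the origin x = 0 is exponentially stable, and every solution satisfies ‖x(t)‖ ≤ √(λ₂/(λ₁(1−σ))) ‖x(0)‖ exp(−σ t/(2T)), where σ = 1/((1+ρ)(1+ρ c T² γ λ_Σ)) and ρ = λ₂/(μ T γ); in particular 0 < σ < 1. -/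

import Mathlib

open Matrix MeasureTheory

noncomputable section

/-- Euclidean norm of a finite-dimensional real vector. -/
def euclNorm {ι : Type*} [Fintype ι] (x : ι → ℝ) : ℝ := Real.sqrt (∑ i, x i * x i)

/-- The constant `ρ = λ₂/(μTγ)`. -/
def rhoPE (lam2 μ T γ : ℝ) : ℝ := lam2 / (μ * T * γ)

/-- The constant `σ = 1/((1+ρ)(1+ρcT²γλ_Σ))`. -/
def sigmaPE (ρ c T γ lamS : ℝ) : ℝ := 1 / ((1 + ρ) * (1 + ρ * c * T ^ 2 * γ * lamS))

section Stmt15Aux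

lemma dot_self_nonneg' {d : ℕ} (v : Fin d → ℝ) : 0 ≤ v ⬝ᵥ v :=
  Finset.sum_nonneg fun _ _ => mul_self_nonneg _

lemma dot_eq_sum {d : ℕ} (v w : Fin d → ℝ) : v ⬝ᵥ w = ∑ i, v i * w i := rfl

lemma euclNorm_sq_eq {d : ℕ} (v : Fin d → ℝ) : euclNorm v ^ 2 = v ⬝ᵥ v := by
  rw [euclNorm, Real.sq_sqrt (Finset.sum_nonneg fun i _ => mul_self_nonneg _)]; rfl

lemma dot_symm' {d : ℕ} {M : Matrix (Fin d) (Fin d) ℝ} (hM : M.IsHermitian)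
    (a b : Fin d → ℝ) : a ⬝ᵥ M.mulVec b = b ⬝ᵥ M.mulVec a := by
  have hs : ∀ i j, M i j = M j i := fun i j => by
    simpa using hM.apply j i
  simp only [dotProduct, Matrix.mulVec, Finset.mul_sum]
  rw [Finset.sum_comm]
  exact Finset.sum_congr rfl fun j _ => Finset.sum_congr rfl fun i _ => by rw [hs i j]; ring

lemma quad_expand {d : ℕ} {M : Matrix (Fin d) (Fin d) ℝ}
    (a b : Fin d → ℝ) (s : ℝ) :
    (a + s • b) ⬝ᵥ M.mulVec (a + s • b)
      = a ⬝ᵥ M.mulVec a + s * (a ⬝ᵥ M.mulVec b) + s * (b ⬝ᵥ M.mulVec a)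
        + s ^ 2 * (b ⬝ᵥ M.mulVec b) := by
  simp only [Matrix.mulVec_add, Matrix.mulVec_smul, dotProduct_add,
    add_dotProduct, dotProduct_smul, smul_dotProduct, smul_eq_mul]
  ring

lemma quad_bound' {d : ℕ} {M : Matrix (Fin d) (Fin d) ℝ} (hM : M.PosSemidef)
    (v w : Fin d → ℝ) (r : ℝ) (hr : 0 < r) :
    w ⬝ᵥ M.mulVec w ≤
      (1 + r) * (v ⬝ᵥ M.mulVec v) + (1 + 1 / r) * ((w - v) ⬝ᵥ M.mulVec (w - v)) := by
  have hnn : ∀ z : Fin d → ℝ, 0 ≤ z ⬝ᵥ M.mulVec z := fun z => by simpa using hM.dotProduct_mulVec_nonneg z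
  have hsym := dot_symm' hM.1
  set u : Fin d → ℝ := w - v with hu
  have hw : w = v + u := by rw [hu]; abel
  set qv := v ⬝ᵥ M.mulVec v
  set qu := u ⬝ᵥ M.mulVec u
  set B := v ⬝ᵥ M.mulVec u with hB
  have e1 : w ⬝ᵥ M.mulVec w = qv + 2 * B + qu := by
    have h := quad_expand (M := M) v u 1
    rw [one_smul] at h
    rw [hw, h, hsym u v]; ring
  have e2 : 0 ≤ qu - 2 * r * B + r ^ 2 * qv := by
    have h := hnn (u + (-r) • v)
    rw [quad_expand] at h
    rw [hsym u v] at h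
    linarith
  have h4 : 2 * B - r * qv ≤ qu / r := (le_div_iff₀ hr).2 (by nlinarith)
  have h5 : qu / r = (1 / r) * qu := by ring
  rw [e1]
  linarith

lemma entry_abs_le {d : ℕ} {M : Matrix (Fin d) (Fin d) ℝ} {lamS : ℝ}
    (hpsd : M.PosSemidef) (hb : ∀ z : Fin d → ℝ, z ⬝ᵥ M.mulVec z ≤ lamS * (z ⬝ᵥ z))
    (i j : Fin d) : |M i j| ≤ lamS := by
  have hnn : ∀ z : Fin d → ℝ, 0 ≤ z ⬝ᵥ M.mulVec z := fun z => by simpa using hpsd.dotProduct_mulVec_nonneg z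
  have hsym : ∀ a b, M a b = M b a := fun a b => by simpa using hpsd.1.apply b a
  have hq : ∀ k : Fin d, (Pi.single k 1 : Fin d → ℝ) ⬝ᵥ M.mulVec (Pi.single k 1) = M k k := by
    intro k; simp [Matrix.mulVec_single, single_dotProduct]
  have hqq : ∀ k : Fin d, (Pi.single k 1 : Fin d → ℝ) ⬝ᵥ (Pi.single k 1) = 1 := by
    intro k; simp [dotProduct_single]
  have hdiag : ∀ k, 0 ≤ M k k ∧ M k k ≤ lamS := by
    intro k
    constructor
    · have := hnn (Pi.single k 1); rwa [hq] at this
    · have := hb (Pi.single k 1); rwa [hq, hqq, mul_one] at this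
  rcases eq_or_ne i j with rfl | hij
  · rw [abs_le]; exact ⟨by linarith [(hdiag i).1, (hdiag i).2, abs_nonneg (M i i)], (hdiag i).2⟩
  · have hcomp : ∀ s : ℝ, ((Pi.single i 1 : Fin d → ℝ) + s • (Pi.single j 1 : Fin d → ℝ)) ⬝ᵥ
        M.mulVec ((Pi.single i 1 : Fin d → ℝ) + s • (Pi.single j 1 : Fin d → ℝ))
        = M i i + 2 * s * M i j + s ^ 2 * M j j := by
      intro s
      rw [quad_expand]
      have h1 : (Pi.single i 1 : Fin d → ℝ) ⬝ᵥ M.mulVec (Pi.single j 1) = M i j := by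
        simp [Matrix.mulVec_single, single_dotProduct]
      have h2 : (Pi.single j 1 : Fin d → ℝ) ⬝ᵥ M.mulVec (Pi.single i 1) = M j i := by
        simp [Matrix.mulVec_single, single_dotProduct]
      rw [hq, hq, h1, h2, hsym j i]; ring
    have hp := hnn ((Pi.single i 1 : Fin d → ℝ) + (1 : ℝ) • (Pi.single j 1 : Fin d → ℝ))
    rw [hcomp 1] at hp
    have hm := hnn ((Pi.single i 1 : Fin d → ℝ) + (-1 : ℝ) • (Pi.single j 1 : Fin d → ℝ))
    rw [hcomp (-1)] at hm
    have hii := hdiag i; have hjj := hdiag j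
    rw [abs_le]
    constructor <;> nlinarith

lemma integrableOn_of_bdd {F : ℝ → ℝ} {a b C : ℝ}
    (hmeas : AEStronglyMeasurable F (volume.restrict (Set.Icc a b)))
    (hbd : ∀ s ∈ Set.Icc a b, |F s| ≤ C) :
    IntegrableOn F (Set.Icc a b) volume := by
  refine ⟨hmeas, HasFiniteIntegral.of_bounded (C := C) ?_⟩
  refine (ae_restrict_iff' measurableSet_Icc).2 (ae_of_all _ fun s hs => ?_)
  simpa [Real.norm_eq_abs] using hbd s hs

lemma intervalIntegrable_of_bdd {F : ℝ → ℝ} {a b C : ℝ} (hab : a ≤ b)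
    (hmeas : AEStronglyMeasurable F (volume.restrict (Set.Icc a b)))
    (hbd : ∀ s ∈ Set.Icc a b, |F s| ≤ C) :
    IntervalIntegrable F volume a b := by
  rw [intervalIntegrable_iff_integrableOn_Icc_of_le hab]
  exact integrableOn_of_bdd hmeas hbd

lemma aesm_quad {d : ℕ} {Sig : ℝ → Matrix (Fin d) (Fin d) ℝ}
    (hSmeas : ∀ i j : Fin d, Measurable fun t => Sig t i j)
    {u v : ℝ → Fin d → ℝ} {s : Set ℝ} (hs : MeasurableSet s)
    (hu : ∀ i, ContinuousOn (fun τ => u τ i) s) (hv : ∀ i, ContinuousOn (fun τ => v τ i) s) :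
    AEStronglyMeasurable (fun τ => u τ ⬝ᵥ (Sig τ).mulVec (v τ)) (volume.restrict s) := by
  have he : (fun τ => u τ ⬝ᵥ (Sig τ).mulVec (v τ))
      = fun τ => ∑ i, ∑ j, u τ i * (Sig τ i j * v τ j) := by
    funext τ
    simp [dotProduct, Matrix.mulVec, Finset.mul_sum]
  rw [he]
  refine Finset.aestronglyMeasurable_fun_sum _ fun i _ =>
    Finset.aestronglyMeasurable_fun_sum _ fun j _ => ?_
  exact ((hu i).aestronglyMeasurable hs).mul
    (((hSmeas i j).aestronglyMeasurable.restrict).mul ((hv j).aestronglyMeasurable hs))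

end Stmt15Aux

set_option maxHeartbeats 2000000 in
/-- Theorem 3: PE-Lyapunov exponential stability.  For `ẋ = f(x,t)` with
`f(0,t) = 0`, a Lyapunov function `λ₁‖x‖² ≤ 𝓛(t,x) ≤ λ₂‖x‖²` whose derivative along the
solution satisfies `d𝓛/dt ≤ −γ xᵀΣ(t)x` and `d𝓛/dt ≤ −(1/c)‖f(x,t)‖²`, with `Σ(t) ≥ 0`,
`‖Σ(t)‖ ≤ λ_Σ` persistently exciting with constants `T, μ`, the origin is exponentially
stable and `‖x(t)‖ ≤ √(λ₂/(λ₁(1−σ))) ‖x(0)‖ e^{−σt/(2T)}` with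
`σ = 1/((1+ρ)(1+ρcT²γλ_Σ))`, `ρ = λ₂/(μTγ)`; in particular `0 < σ < 1`. -/
theorem stmt15
    (d : ℕ) (f : (Fin d → ℝ) → ℝ → (Fin d → ℝ)) (L : ℝ → (Fin d → ℝ) → ℝ)
    (Sig : ℝ → Matrix (Fin d) (Fin d) ℝ)
    (lam1 lam2 lamS γ c T μ : ℝ)
    (hlam1 : 0 < lam1) (hlam2 : 0 < lam2) (hlamS : 0 < lamS)
    (hγ : 0 < γ) (hc : 0 < c) (hT : 0 < T) (hμ : 0 < μ)
    (hf0 : ∀ t : ℝ, f 0 t = 0)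
    (hSmeas : ∀ i j : Fin d, Measurable fun t => Sig t i j)
    (hSpsd : ∀ t : ℝ, 0 ≤ t → (Sig t).PosSemidef)
    (hSbound : ∀ t : ℝ, 0 ≤ t → ∀ z : Fin d → ℝ,
      z ⬝ᵥ (Sig t).mulVec z ≤ lamS * (z ⬝ᵥ z))
    -- (b) Σ is persistently exciting with constants T, μ
    (hPE : ∀ t : ℝ, 0 ≤ t →
      ((T⁻¹ • Matrix.of fun i j => ∫ τ in t..(t + T), Sig τ i j) -
        μ • (1 : Matrix (Fin d) (Fin d) ℝ)).PosSemidef)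
    -- sandwich bounds on the Lyapunov function
    (hL : ∀ t : ℝ, 0 ≤ t → ∀ z : Fin d → ℝ,
      lam1 * euclNorm z ^ 2 ≤ L t z ∧ L t z ≤ lam2 * euclNorm z ^ 2)
    -- a solution of ẋ = f(x,t)
    (x : ℝ → (Fin d → ℝ)) (hsol : ∀ t : ℝ, 0 ≤ t → HasDerivAt x (f (x t) t) t)
    -- derivative of 𝓛 along the solution, with bounds (a) and (c)
    (DL : ℝ → ℝ)
    (hLd : ∀ t : ℝ, 0 ≤ t → HasDerivAt (fun s => L s (x s)) (DL t) t)
    (ha : ∀ t : ℝ, 0 ≤ t → DL t ≤ -γ * (x t ⬝ᵥ (Sig t).mulVec (x t)))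
    (hcc : ∀ t : ℝ, 0 ≤ t → DL t ≤ -(1 / c) * euclNorm (f (x t) t) ^ 2) :
    0 < sigmaPE (rhoPE lam2 μ T γ) c T γ lamS ∧
    sigmaPE (rhoPE lam2 μ T γ) c T γ lamS < 1 ∧
    ∀ t : ℝ, 0 ≤ t →
      euclNorm (x t) ≤
        Real.sqrt (lam2 / (lam1 * (1 - sigmaPE (rhoPE lam2 μ T γ) c T γ lamS))) *
          euclNorm (x 0) *
          Real.exp (-(sigmaPE (rhoPE lam2 μ T γ) c T γ lamS) * t / (2 * T)) := by
  set ρ : ℝ := rhoPE lam2 μ T γ with hρdef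
  set σ : ℝ := sigmaPE ρ c T γ lamS with hσdef
  set A : ℝ := c * T ^ 2 * γ * lamS with hAdef
  have hρpos : 0 < ρ := by rw [hρdef, rhoPE]; exact div_pos hlam2 (by positivity)
  have hApos : 0 < A := by rw [hAdef]; positivity
  have hσ_eq : σ = 1 / ((1 + ρ) * (1 + ρ * A)) := by
    rw [hσdef, sigmaPE, hAdef]; ring_nf
  have hPpos : 0 < (1 + ρ) * (1 + ρ * A) := by positivity
  have hσpos : 0 < σ := by rw [hσ_eq]; positivity
  have hσlt1 : σ < 1 := by
    rw [hσ_eq, div_lt_one hPpos]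
    nlinarith [mul_pos hρpos hApos, mul_pos (mul_pos hρpos hρpos) hApos]
  have h1σ : 0 < 1 - σ := by linarith
  -- basic facts about the solution and Lyapunov function
  have hxcontAt : ∀ t : ℝ, 0 ≤ t → ContinuousAt x t := fun t ht => (hsol t ht).continuousAt
  have hgderiv : ∀ t : ℝ, 0 ≤ t → HasDerivAt (fun s => L s (x s)) (DL t) t := hLd
  have hDL0 : ∀ t : ℝ, 0 ≤ t → DL t ≤ 0 := by
    intro t ht
    have h := hcc t ht
    have h2 : 0 ≤ euclNorm (f (x t) t) ^ 2 := sq_nonneg _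
    nlinarith [one_div_pos.2 hc]
  have hganti : AntitoneOn (fun t => L t (x t)) (Set.Ici (0:ℝ)) := by
    apply antitoneOn_of_deriv_nonpos (convex_Ici 0)
    · exact fun t ht => (hgderiv t ht).continuousAt.continuousWithinAt
    · intro t ht
      rw [interior_Ici] at ht
      exact (hgderiv t ht.le).differentiableAt.differentiableWithinAt
    · intro t ht
      rw [interior_Ici] at ht
      rw [(hgderiv t ht.le).deriv]
      exact hDL0 t ht.le
  have hgnn : ∀ t : ℝ, 0 ≤ t → 0 ≤ L t (x t) := fun t ht =>
    le_trans (by positivity : (0:ℝ) ≤ lam1 * euclNorm (x t) ^ 2) (hL t ht (x t)).1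
  -- Step A: increment bound from hypothesis (c)
  have stepA : ∀ t₀ : ℝ, 0 ≤ t₀ → ∀ τ ∈ Set.Icc t₀ (t₀ + T),
      (x τ - x t₀) ⬝ᵥ (x τ - x t₀) ≤ c * T * (L t₀ (x t₀) - L τ (x τ)) := by
    intro t₀ ht₀ τ hτ
    set v : Fin d → ℝ := x τ - x t₀ with hv
    set N : ℝ := v ⬝ᵥ v with hN
    have hNnn : 0 ≤ N := dot_self_nonneg' v
    set F : ℝ → ℝ := fun s => (∑ i, v i * x s i) - N / (2 * T) * s + c * T / 2 * L s (x s)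
      with hFdef
    have hFderiv : ∀ s : ℝ, 0 ≤ s →
        HasDerivAt F ((∑ i, v i * f (x s) s i) - N / (2 * T) + c * T / 2 * DL s) s := by
      intro s hs
      have hx' : ∀ i, HasDerivAt (fun s' => x s' i) (f (x s) s i) s := fun i =>
        hasDerivAt_pi.1 (hsol s hs) i
      have h1 : HasDerivAt (fun s' => ∑ i, v i * x s' i) (∑ i, v i * f (x s) s i) s :=
        HasDerivAt.fun_sum fun i _ => (hx' i).const_mul (v i)
      have h2 : HasDerivAt (fun s' => N / (2 * T) * s') (N / (2 * T)) s := by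
        simpa using (hasDerivAt_id s).const_mul (N / (2 * T))
      exact (h1.sub h2).add ((hgderiv s hs).const_mul (c * T / 2))
    have hF'le : ∀ s : ℝ, 0 ≤ s →
        (∑ i, v i * f (x s) s i) - N / (2 * T) + c * T / 2 * DL s ≤ 0 := by
      intro s hs
      have hAM : ∑ i, v i * f (x s) s i
          ≤ N / (2 * T) + T / 2 * (∑ i, f (x s) s i * f (x s) s i) := by
        have hterm : ∀ i : Fin d, v i * f (x s) s i
            ≤ (v i * v i) / (2 * T) + T / 2 * (f (x s) s i * f (x s) s i) := by
          intro i
          rw [div_add' _ _ _ (by positivity : (2*T) ≠ 0)]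
          rw [le_div_iff₀ (by positivity : (0:ℝ) < 2 * T)]
          nlinarith [sq_nonneg (v i - T * f (x s) s i)]
        calc ∑ i, v i * f (x s) s i
            ≤ ∑ i, ((v i * v i) / (2 * T) + T / 2 * (f (x s) s i * f (x s) s i)) :=
              Finset.sum_le_sum fun i _ => hterm i
          _ = N / (2 * T) + T / 2 * (∑ i, f (x s) s i * f (x s) s i) := by
              rw [Finset.sum_add_distrib, ← Finset.sum_div, ← Finset.mul_sum, hN, dot_eq_sum]
      have hDLs := hcc s hs
      have hE : euclNorm (f (x s) s) ^ 2 = ∑ i, f (x s) s i * f (x s) s i := by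
        rw [euclNorm_sq_eq, dot_eq_sum]
      have h5 : c * T / 2 * DL s ≤ -(T / 2) * (∑ i, f (x s) s i * f (x s) s i) := by
        have h6 := mul_le_mul_of_nonneg_left hDLs (by positivity : (0:ℝ) ≤ c * T / 2)
        calc c * T / 2 * DL s ≤ c * T / 2 * (-(1 / c) * euclNorm (f (x s) s) ^ 2) := h6
          _ = -(T / 2) * (∑ i, f (x s) s i * f (x s) s i) := by
              rw [hE]; field_simp
      linarith
    have hsub : Set.Icc t₀ τ ⊆ Set.Ici (0:ℝ) := fun s hs => le_trans ht₀ hs.1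
    have hFanti : AntitoneOn F (Set.Icc t₀ τ) := by
      apply antitoneOn_of_deriv_nonpos (convex_Icc _ _)
      · exact fun s hs => (hFderiv s (hsub hs)).continuousAt.continuousWithinAt
      · intro s hs
        rw [interior_Icc] at hs
        exact (hFderiv s (le_trans ht₀ hs.1.le)).differentiableAt.differentiableWithinAt
      · intro s hs
        rw [interior_Icc] at hs
        have h0s : (0:ℝ) ≤ s := le_trans ht₀ hs.1.le
        rw [(hFderiv s h0s).deriv]
        exact hF'le s h0s
    have hFle : F τ ≤ F t₀ :=
      hFanti ⟨le_refl _, hτ.1⟩ ⟨hτ.1, le_refl _⟩ hτ.1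
    simp only [hFdef] at hFle
    have hdd : (∑ i, v i * x τ i) - (∑ i, v i * x t₀ i) = N := by
      rw [hN, dot_eq_sum, ← Finset.sum_sub_distrib]
      refine Finset.sum_congr rfl fun i _ => ?_
      rw [hv]; simp [Pi.sub_apply]; ring
    have h7 : N / (2 * T) * (τ - t₀) ≤ N / 2 := by
      have hτT : τ - t₀ ≤ T := by linarith [hτ.2]
      calc N / (2 * T) * (τ - t₀) ≤ N / (2 * T) * T := by
            apply mul_le_mul_of_nonneg_left hτT (by positivity)
        _ = N / 2 := by field_simp
    show N ≤ c * T * (L t₀ (x t₀) - L τ (x τ))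
    nlinarith [hFle, hdd, h7]
  -- interval integrability of the entries of Σ
  have hSigInt : ∀ a b : ℝ, 0 ≤ a → a ≤ b → ∀ i j : Fin d,
      IntervalIntegrable (fun τ => Sig τ i j) volume a b := by
    intro a b ha' hab i j
    refine intervalIntegrable_of_bdd (C := lamS) hab ((hSmeas i j).aestronglyMeasurable.restrict) ?_
    intro s hs
    exact entry_abs_le (hSpsd s (ha'.trans hs.1)) (hSbound s (ha'.trans hs.1)) i j
  -- PE in scalar form
  have hPEs : ∀ t₀ : ℝ, 0 ≤ t₀ → ∀ z : Fin d → ℝ,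
      μ * T * (z ⬝ᵥ z) ≤ ∫ τ in t₀..t₀ + T, z ⬝ᵥ (Sig τ).mulVec z := by
    intro t₀ ht₀ z
    have hab : t₀ ≤ t₀ + T := by linarith
    have hint : ∀ i j : Fin d,
        IntervalIntegrable (fun τ => z i * (Sig τ i j * z j)) volume t₀ (t₀ + T) :=
      fun i j => ((hSigInt t₀ (t₀ + T) ht₀ hab i j).mul_const (z j)).const_mul (z i)
    have hsum : ∀ i : Fin d, IntervalIntegrable (fun τ => ∑ j, z i * (Sig τ i j * z j))
        volume t₀ (t₀ + T) := by
      intro i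
      have h := IntervalIntegrable.sum (μ := volume) (a := t₀) (b := t₀ + T) Finset.univ
        (f := fun j τ => z i * (Sig τ i j * z j)) (fun j _ => hint i j)
      have he : (∑ j, fun τ => z i * (Sig τ i j * z j))
          = fun τ => ∑ j, z i * (Sig τ i j * z j) := by
        funext τ; simp
      rwa [he] at h
    have hswap : (∫ τ in t₀..t₀ + T, z ⬝ᵥ (Sig τ).mulVec z)
        = ∑ i, ∑ j, z i * (∫ τ in t₀..t₀ + T, Sig τ i j) * z j := by
      have e1 : ∀ τ : ℝ, z ⬝ᵥ (Sig τ).mulVec z = ∑ i, ∑ j, z i * (Sig τ i j * z j) := by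
        intro τ; simp [dotProduct, Matrix.mulVec, Finset.mul_sum]
      calc (∫ τ in t₀..t₀ + T, z ⬝ᵥ (Sig τ).mulVec z)
          = ∫ τ in t₀..t₀ + T, ∑ i, ∑ j, z i * (Sig τ i j * z j) :=
            intervalIntegral.integral_congr (fun τ _ => e1 τ)
        _ = ∑ i, ∫ τ in t₀..t₀ + T, ∑ j, z i * (Sig τ i j * z j) :=
            intervalIntegral.integral_finset_sum (fun i _ => hsum i)
        _ = ∑ i, ∑ j, ∫ τ in t₀..t₀ + T, z i * (Sig τ i j * z j) :=
            Finset.sum_congr rfl fun i _ =>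
              intervalIntegral.integral_finset_sum (fun j _ => hint i j)
        _ = ∑ i, ∑ j, z i * (∫ τ in t₀..t₀ + T, Sig τ i j) * z j := by
            refine Finset.sum_congr rfl fun i _ => Finset.sum_congr rfl fun j _ => ?_
            rw [intervalIntegral.integral_const_mul, intervalIntegral.integral_mul_const]
            ring
    have h0 := (hPE t₀ ht₀).dotProduct_mulVec_nonneg z
    simp only [Matrix.sub_mulVec, Matrix.smul_mulVec, Matrix.one_mulVec,
      dotProduct_sub, dotProduct_smul, smul_eq_mul, star_trivial] at h0
    have h1 : z ⬝ᵥ (Matrix.of fun i j => ∫ τ in t₀..t₀ + T, Sig τ i j).mulVec z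
        = ∑ i, ∑ j, z i * (∫ τ in t₀..t₀ + T, Sig τ i j) * z j := by
      simp [dotProduct, Matrix.mulVec, Matrix.of_apply, Finset.mul_sum, mul_assoc]
    rw [h1] at h0
    rw [hswap]
    have hTne : (T:ℝ) ≠ 0 := ne_of_gt hT
    have h2 : μ * (z ⬝ᵥ z)
        ≤ T⁻¹ * ∑ i, ∑ j, z i * (∫ τ in t₀..t₀ + T, Sig τ i j) * z j := by linarith
    have h3 := mul_le_mul_of_nonneg_left h2 hT.le
    rw [← mul_assoc, ← mul_assoc, mul_inv_cancel₀ hTne, one_mul] at h3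
    linarith
  -- main one-period contraction
  have key : ∀ t₀ : ℝ, 0 ≤ t₀ → L (t₀ + T) (x (t₀ + T)) ≤ (1 - σ) * L t₀ (x t₀) := by
    intro t₀ ht₀
    have hab : t₀ ≤ t₀ + T := by linarith
    have hb0 : (0:ℝ) ≤ t₀ + T := by linarith
    have hsub : Set.Icc t₀ (t₀ + T) ⊆ Set.Ici (0:ℝ) := fun s hs => le_trans ht₀ hs.1
    set Δ : ℝ := L t₀ (x t₀) - L (t₀ + T) (x (t₀ + T)) with hΔ
    have hΔ0 : 0 ≤ Δ := sub_nonneg.2 (hganti (Set.mem_Ici.2 ht₀) (Set.mem_Ici.2 hb0) hab)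
    have hr : 0 < ρ * A := mul_pos hρpos hApos
    have hxc : ∀ i : Fin d, ContinuousOn (fun τ => x τ i) (Set.Icc t₀ (t₀ + T)) := by
      intro i τ hτ
      exact ((continuous_apply i).continuousAt.comp (hxcontAt τ (hsub hτ))).continuousWithinAt
    have hwc : ∀ i : Fin d, ContinuousOn (fun τ => (x t₀ - x τ) i) (Set.Icc t₀ (t₀ + T)) := by
      intro i
      have : (fun τ => (x t₀ - x τ) i) = fun τ => x t₀ i - x τ i := by
        funext τ; simp [Pi.sub_apply]
      rw [this]
      exact continuousOn_const.sub (hxc i)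
    have hxbdd : ∀ τ ∈ Set.Icc t₀ (t₀ + T), x τ ⬝ᵥ x τ ≤ L t₀ (x t₀) / lam1 := by
      intro τ hτ
      have h1 := (hL τ (hsub hτ) (x τ)).1
      rw [euclNorm_sq_eq] at h1
      have h2 : L τ (x τ) ≤ L t₀ (x t₀) :=
        hganti (Set.mem_Ici.2 ht₀) (Set.mem_Ici.2 (hsub hτ)) hτ.1
      rw [le_div_iff₀ hlam1]
      nlinarith
    have hdiffbdd : ∀ τ ∈ Set.Icc t₀ (t₀ + T),
        (x t₀ - x τ) ⬝ᵥ (x t₀ - x τ) ≤ c * T * Δ := by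
      intro τ hτ
      have h3 := stepA t₀ ht₀ τ hτ
      have heq : (x t₀ - x τ) ⬝ᵥ (x t₀ - x τ) = (x τ - x t₀) ⬝ᵥ (x τ - x t₀) := by
        rw [show x t₀ - x τ = -(x τ - x t₀) from (neg_sub _ _).symm,
          neg_dotProduct, dotProduct_neg, neg_neg]
      have h4 : L (t₀ + T) (x (t₀ + T)) ≤ L τ (x τ) :=
        hganti (Set.mem_Ici.2 (hsub hτ)) (Set.mem_Ici.2 hb0) hτ.2
      rw [heq]
      nlinarith [mul_le_mul_of_nonneg_left (show L t₀ (x t₀) - L τ (x τ) ≤ Δ by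
        rw [hΔ]; linarith) (by positivity : (0:ℝ) ≤ c * T)]
    -- integrability of the three quadratic integrands
    have hQmeas := aesm_quad (u := fun τ => x τ) (v := fun τ => x τ) hSmeas
      (measurableSet_Icc (a := t₀) (b := t₀ + T)) hxc hxc
    have hWmeas := aesm_quad (u := fun _ => x t₀) (v := fun _ => x t₀) hSmeas
      (measurableSet_Icc (a := t₀) (b := t₀ + T)) (fun _ => continuousOn_const)
      (fun _ => continuousOn_const)
    have hDmeas := aesm_quad (u := fun τ => x t₀ - x τ) (v := fun τ => x t₀ - x τ) hSmeas
      (measurableSet_Icc (a := t₀) (b := t₀ + T)) hwc hwc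
    have hQint : IntegrableOn (fun τ => x τ ⬝ᵥ (Sig τ).mulVec (x τ))
        (Set.Icc t₀ (t₀ + T)) volume := by
      refine integrableOn_of_bdd (C := lamS * (L t₀ (x t₀) / lam1)) hQmeas fun τ hτ => ?_
      have h0 : 0 ≤ x τ ⬝ᵥ (Sig τ).mulVec (x τ) := by simpa using (hSpsd τ (hsub hτ)).dotProduct_mulVec_nonneg (x τ)
      have h1 := hSbound τ (hsub hτ) (x τ)
      have h2 := hxbdd τ hτ
      rw [abs_le]; constructor <;> nlinarith
    have hWint : IntegrableOn (fun τ => x t₀ ⬝ᵥ (Sig τ).mulVec (x t₀))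
        (Set.Icc t₀ (t₀ + T)) volume := by
      refine integrableOn_of_bdd (C := lamS * (x t₀ ⬝ᵥ x t₀)) hWmeas fun τ hτ => ?_
      have h0 : 0 ≤ x t₀ ⬝ᵥ (Sig τ).mulVec (x t₀) := by
        simpa using (hSpsd τ (hsub hτ)).dotProduct_mulVec_nonneg (x t₀)
      have h1 := hSbound τ (hsub hτ) (x t₀)
      rw [abs_le]; constructor <;> nlinarith [dot_self_nonneg' (x t₀), hlamS]
    have hDint : IntegrableOn (fun τ => (x t₀ - x τ) ⬝ᵥ (Sig τ).mulVec (x t₀ - x τ))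
        (Set.Icc t₀ (t₀ + T)) volume := by
      refine integrableOn_of_bdd (C := lamS * (c * T * Δ)) hDmeas fun τ hτ => ?_
      have h0 : 0 ≤ (x t₀ - x τ) ⬝ᵥ (Sig τ).mulVec (x t₀ - x τ) := by
        simpa using (hSpsd τ (hsub hτ)).dotProduct_mulVec_nonneg (x t₀ - x τ)
      have h1 := hSbound τ (hsub hτ) (x t₀ - x τ)
      have h2 := hdiffbdd τ hτ
      rw [abs_le]; constructor <;> nlinarith [dot_self_nonneg' (x t₀ - x τ), hlamS]
    have hQii : IntervalIntegrable (fun τ => x τ ⬝ᵥ (Sig τ).mulVec (x τ)) volume t₀ (t₀ + T) :=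
      (intervalIntegrable_iff_integrableOn_Icc_of_le hab).2 hQint
    have hWii : IntervalIntegrable (fun τ => x t₀ ⬝ᵥ (Sig τ).mulVec (x t₀)) volume t₀ (t₀ + T) :=
      (intervalIntegrable_iff_integrableOn_Icc_of_le hab).2 hWint
    have hDii : IntervalIntegrable (fun τ => (x t₀ - x τ) ⬝ᵥ (Sig τ).mulVec (x t₀ - x τ))
        volume t₀ (t₀ + T) :=
      (intervalIntegrable_iff_integrableOn_Icc_of_le hab).2 hDint
    -- FTC comparison using hypothesis (a)
    have hFTC : L (t₀ + T) (x (t₀ + T)) - L t₀ (x t₀)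
        ≤ ∫ τ in t₀..t₀ + T, -γ * (x τ ⬝ᵥ (Sig τ).mulVec (x τ)) := by
      refine intervalIntegral.sub_le_integral_of_hasDeriv_right_of_le hab
        (fun s hs => (hgderiv s (hsub hs)).continuousAt.continuousWithinAt)
        (fun s hs => (hgderiv s (hsub (Set.Ioo_subset_Icc_self hs))).hasDerivWithinAt)
        (hQint.const_mul (-γ)) ?_
      exact fun s hs => ha s (hsub (Set.Ioo_subset_Icc_self hs))
    rw [intervalIntegral.integral_const_mul] at hFTC
    have hQle : (∫ τ in t₀..t₀ + T, x τ ⬝ᵥ (Sig τ).mulVec (x τ)) ≤ Δ / γ := by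
      rw [le_div_iff₀ hγ]
      rw [hΔ]; nlinarith
    -- integrate the pointwise quadratic bound
    have hmono : (∫ τ in t₀..t₀ + T, x t₀ ⬝ᵥ (Sig τ).mulVec (x t₀))
        ≤ ∫ τ in t₀..t₀ + T, ((1 + ρ * A) * (x τ ⬝ᵥ (Sig τ).mulVec (x τ))
            + (1 + 1 / (ρ * A)) * ((x t₀ - x τ) ⬝ᵥ (Sig τ).mulVec (x t₀ - x τ))) := by
      refine intervalIntegral.integral_mono_on hab hWii
        ((hQii.const_mul _).add (hDii.const_mul _)) fun τ hτ => ?_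
      exact quad_bound' (hSpsd τ (hsub hτ)) (x τ) (x t₀) (ρ * A) hr
    rw [intervalIntegral.integral_add (hQii.const_mul _) (hDii.const_mul _),
      intervalIntegral.integral_const_mul, intervalIntegral.integral_const_mul] at hmono
    have hPEw := hPEs t₀ ht₀ (x t₀)
    have hDle : (∫ τ in t₀..t₀ + T, (x t₀ - x τ) ⬝ᵥ (Sig τ).mulVec (x t₀ - x τ))
        ≤ T * (lamS * (c * T * Δ)) := by
      have hm := intervalIntegral.integral_mono_on hab hDii intervalIntegrable_const
        (g := fun _ => lamS * (c * T * Δ)) (fun τ hτ => by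
          have h1 := hSbound τ (hsub hτ) (x t₀ - x τ)
          have h2 := hdiffbdd τ hτ
          show (x t₀ - x τ) ⬝ᵥ (Sig τ).mulVec (x t₀ - x τ) ≤ lamS * (c * T * Δ)
          nlinarith [mul_le_mul_of_nonneg_left h2 hlamS.le])
      rw [intervalIntegral.integral_const, smul_eq_mul] at hm
      have hTeq : t₀ + T - t₀ = T := by ring
      rw [hTeq] at hm
      linarith
    have hcomb : μ * T * (x t₀ ⬝ᵥ x t₀)
        ≤ (1 + ρ * A) * (Δ / γ) + (1 + 1 / (ρ * A)) * (T * (lamS * (c * T * Δ))) := by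
      have h1 : (1 + ρ * A) * (∫ τ in t₀..t₀ + T, x τ ⬝ᵥ (Sig τ).mulVec (x τ))
          ≤ (1 + ρ * A) * (Δ / γ) := mul_le_mul_of_nonneg_left hQle (by positivity)
      have h2 : (1 + 1 / (ρ * A)) * (∫ τ in t₀..t₀ + T, (x t₀ - x τ) ⬝ᵥ (Sig τ).mulVec (x t₀ - x τ))
          ≤ (1 + 1 / (ρ * A)) * (T * (lamS * (c * T * Δ))) :=
        mul_le_mul_of_nonneg_left hDle (by positivity)
      linarith
    have hwg : L t₀ (x t₀) ≤ lam2 * (x t₀ ⬝ᵥ x t₀) := by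
      have h := (hL t₀ ht₀ (x t₀)).2
      rwa [euclNorm_sq_eq] at h
    have hcoeff : lam2 * ((1 + ρ * A) / γ + (1 + 1 / (ρ * A)) * (T * (lamS * (c * T))))
        = μ * T * ((1 + ρ) * (1 + ρ * A)) := by
      simp only [hρdef, hAdef, rhoPE]
      field_simp
      ring
    have hgoal' : μ * T * L t₀ (x t₀) ≤ μ * T * (((1 + ρ) * (1 + ρ * A)) * Δ) := by
      have h1 : μ * T * L t₀ (x t₀) ≤ μ * T * (lam2 * (x t₀ ⬝ᵥ x t₀)) :=
        mul_le_mul_of_nonneg_left hwg (by positivity)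
      have h2 : lam2 * (μ * T * (x t₀ ⬝ᵥ x t₀))
          ≤ lam2 * ((1 + ρ * A) * (Δ / γ) + (1 + 1 / (ρ * A)) * (T * (lamS * (c * T * Δ)))) :=
        mul_le_mul_of_nonneg_left hcomb hlam2.le
      have h3 : lam2 * ((1 + ρ * A) * (Δ / γ) + (1 + 1 / (ρ * A)) * (T * (lamS * (c * T * Δ))))
          = μ * T * (((1 + ρ) * (1 + ρ * A)) * Δ) := by
        linear_combination Δ * hcoeff
      calc μ * T * L t₀ (x t₀) ≤ μ * T * (lam2 * (x t₀ ⬝ᵥ x t₀)) := h1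
        _ = lam2 * (μ * T * (x t₀ ⬝ᵥ x t₀)) := by ring
        _ ≤ lam2 * ((1 + ρ * A) * (Δ / γ) + (1 + 1 / (ρ * A)) * (T * (lamS * (c * T * Δ)))) := h2
        _ = μ * T * (((1 + ρ) * (1 + ρ * A)) * Δ) := h3
    have hP : L t₀ (x t₀) ≤ ((1 + ρ) * (1 + ρ * A)) * Δ :=
      le_of_mul_le_mul_left (by
        calc μ * T * L t₀ (x t₀) ≤ μ * T * (((1 + ρ) * (1 + ρ * A)) * Δ) := hgoal') (by positivity)
    have hσΔ : σ * L t₀ (x t₀) ≤ Δ := by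
      rw [hσ_eq, div_mul_eq_mul_div, one_mul, div_le_iff₀ hPpos]
      calc L t₀ (x t₀) ≤ ((1 + ρ) * (1 + ρ * A)) * Δ := hP
        _ = Δ * ((1 + ρ) * (1 + ρ * A)) := by ring
    have : Δ = L t₀ (x t₀) - L (t₀ + T) (x (t₀ + T)) := hΔ
    nlinarith [hσΔ]
  -- iterate the contraction
  have hiter : ∀ n : ℕ, L (n * T) (x (n * T)) ≤ (1 - σ) ^ n * L 0 (x 0) := by
    intro n
    induction n with
    | zero => simp
    | succ n ih =>
      have hn0 : (0:ℝ) ≤ (n : ℝ) * T := by positivity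
      have h1 := key ((n : ℝ) * T) hn0
      have h2 : ((n + 1 : ℕ) : ℝ) * T = (n : ℝ) * T + T := by push_cast; ring
      rw [h2]
      calc L ((n : ℝ) * T + T) (x ((n : ℝ) * T + T)) ≤ (1 - σ) * L ((n:ℝ) * T) (x ((n:ℝ)*T)) := h1
        _ ≤ (1 - σ) * ((1 - σ) ^ n * L 0 (x 0)) := mul_le_mul_of_nonneg_left ih h1σ.le
        _ = (1 - σ) ^ (n + 1) * L 0 (x 0) := by ring
  refine ⟨hσpos, hσlt1, ?_⟩
  intro t ht
  set n : ℕ := ⌊t / T⌋₊ with hn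
  have hn1 : (n : ℝ) * T ≤ t := by
    have h := Nat.floor_le (div_nonneg ht hT.le)
    have h2 := mul_le_mul_of_nonneg_right h hT.le
    calc (n : ℝ) * T ≤ (t / T) * T := h2
      _ = t := by field_simp
  have hn2 : t / T < (n : ℝ) + 1 := Nat.lt_floor_add_one _
  have hgt : L t (x t) ≤ (1 - σ) ^ n * L 0 (x 0) := by
    have h1 : L t (x t) ≤ L ((n:ℝ) * T) (x ((n:ℝ) * T)) :=
      hganti (Set.mem_Ici.2 (by positivity)) (Set.mem_Ici.2 ht) hn1
    exact h1.trans (hiter n)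
  have hlow := (hL t ht (x t)).1
  have hup : L 0 (x 0) ≤ lam2 * euclNorm (x 0) ^ 2 := (hL 0 le_rfl (x 0)).2
  have hxt2 : lam1 * euclNorm (x t) ^ 2 ≤ (1 - σ) ^ n * (lam2 * euclNorm (x 0) ^ 2) := by
    have h := mul_le_mul_of_nonneg_left hup (pow_nonneg h1σ.le n)
    linarith
  have hexp1 : (1 - σ) ^ (n + 1) ≤ Real.exp (-σ * t / T) := by
    have h1 : 1 - σ ≤ Real.exp (-σ) := by
      have := Real.add_one_le_exp (-σ); linarith
    have h2 : (1 - σ) ^ (n + 1) ≤ Real.exp (-σ) ^ (n + 1) :=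
      pow_le_pow_left₀ h1σ.le h1 (n + 1)
    have h3 : Real.exp (-σ) ^ (n + 1) = Real.exp (-σ * ((n : ℝ) + 1)) := by
      rw [← Real.exp_nat_mul]; push_cast; ring_nf
    have h4 : Real.exp (-σ * ((n : ℝ) + 1)) ≤ Real.exp (-σ * t / T) := by
      apply Real.exp_le_exp.2
      have h5 : t / T ≤ (n : ℝ) + 1 := hn2.le
      have h6 := mul_le_mul_of_nonneg_left h5 hσpos.le
      have h7 : -σ * t / T = -(σ * (t / T)) := by ring
      rw [h7]; linarith
    calc (1 - σ) ^ (n + 1) ≤ Real.exp (-σ) ^ (n + 1) := h2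
      _ = Real.exp (-σ * ((n : ℝ) + 1)) := h3
      _ ≤ Real.exp (-σ * t / T) := h4
  have hpow : (1 - σ) ^ n ≤ Real.exp (-σ * t / T) / (1 - σ) := by
    rw [le_div_iff₀ h1σ]
    calc (1 - σ) ^ n * (1 - σ) = (1 - σ) ^ (n + 1) := by ring
      _ ≤ Real.exp (-σ * t / T) := hexp1
  have hstep : lam1 * euclNorm (x t) ^ 2
      ≤ Real.exp (-σ * t / T) / (1 - σ) * (lam2 * euclNorm (x 0) ^ 2) := by
    have h := mul_le_mul_of_nonneg_right hpow (by positivity : (0:ℝ) ≤ lam2 * euclNorm (x 0) ^ 2)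
    linarith
  set R : ℝ := Real.sqrt (lam2 / (lam1 * (1 - σ))) * euclNorm (x 0) * Real.exp (-σ * t / (2 * T))
    with hR
  have hRnn : 0 ≤ R := by
    rw [hR]
    have : 0 ≤ euclNorm (x 0) := Real.sqrt_nonneg _
    positivity
  have hRsq : R ^ 2 = lam2 / (lam1 * (1 - σ)) * euclNorm (x 0) ^ 2 * Real.exp (-σ * t / T) := by
    rw [hR, mul_pow, mul_pow, Real.sq_sqrt (by positivity : (0:ℝ) ≤ lam2 / (lam1 * (1 - σ)))]
    have : Real.exp (-σ * t / (2 * T)) ^ 2 = Real.exp (-σ * t / T) := by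
      rw [sq, ← Real.exp_add]
      congr 1
      field_simp
      ring
    rw [this]
  have hfin2 : euclNorm (x t) ^ 2 ≤ R ^ 2 := by
    rw [hRsq]
    have h9 : Real.exp (-σ * t / T) / (1 - σ) * (lam2 * euclNorm (x 0) ^ 2) / lam1
        = lam2 / (lam1 * (1 - σ)) * euclNorm (x 0) ^ 2 * Real.exp (-σ * t / T) := by
      field_simp
    calc euclNorm (x t) ^ 2
        ≤ Real.exp (-σ * t / T) / (1 - σ) * (lam2 * euclNorm (x 0) ^ 2) / lam1 := by
          rw [le_div_iff₀ hlam1]; linarith [hstep]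
      _ = lam2 / (lam1 * (1 - σ)) * euclNorm (x 0) ^ 2 * Real.exp (-σ * t / T) := h9
  calc euclNorm (x t) = Real.sqrt (euclNorm (x t) ^ 2) :=
        (Real.sqrt_sq (Real.sqrt_nonneg _)).symm
    _ ≤ Real.sqrt (R ^ 2) := Real.sqrt_le_sqrt hfin2
    _ = R := Real.sqrt_sq hRnn
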